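/- There is an absolute constant C > 0 such that for every integer d ≥ 1 the following holds. Each of the four range spaces on ground set ℝ^d whose ranges are, respectively, all Euclidean balls B_r(p), all stadiums D_r([s,t]), all cylinders C_r([s,t]), and all capped cylinders R_r([s,t]) (over all p, s, t ∈ ℝ^d with s ≠ t and all r > 0) has VC dimension at most C·d²: every finite subset of ℝ^d shattered by one of these families has cardinality at most C·d². The same bound C·d² holds for each of the corresponding dual range spaces, in which the ground set is the set of parameter tuples defining the shapes and the range indexed by a point x ∈ ℝ^d consists of all shapes containing x. -/

import Mathlib

open RealInnerProductSpace

/-- A finite set `Y` is shattered by the family of ranges `R` if every subset of `Y`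
can be realized as the intersection of `Y` with some range in `R`. -/
def Shatters {X : Type*} (R : Set (Set X)) (Y : Finset X) : Prop :=
  ∀ A ⊆ Y, ∃ B ∈ R, ∀ y ∈ Y, y ∈ B ↔ y ∈ A

/-- The line through `s` and `t` (supporting the segment from `s` to `t`). -/
def lineThrough {d : ℕ} (s t : EuclideanSpace ℝ (Fin d)) :
    Set (EuclideanSpace ℝ (Fin d)) :=
  {p | ∃ x : ℝ, p = s + x • (t - s)}

/-- The stadium of radius `r` around the segment `[s, t]`:
the closed `r`-neighborhood of the segment. -/
def stadium {d : ℕ} (s t : EuclideanSpace ℝ (Fin d)) (r : ℝ) :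
    Set (EuclideanSpace ℝ (Fin d)) :=
  Metric.cthickening r (segment ℝ s t)

/-- The (infinite) cylinder of radius `r` around the line supporting the segment `[s, t]`. -/
def cylinder {d : ℕ} (s t : EuclideanSpace ℝ (Fin d)) (r : ℝ) :
    Set (EuclideanSpace ℝ (Fin d)) :=
  {x | ∃ p ∈ lineThrough s t, ‖x - p‖ ≤ r}

/-- The capped cylinder of radius `r` around the segment `[s, t]`. -/
def cappedCylinder {d : ℕ} (s t : EuclideanSpace ℝ (Fin d)) (r : ℝ) :
    Set (EuclideanSpace ℝ (Fin d)) :=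
  {x | ∃ p ∈ segment ℝ s t, ∃ u : EuclideanSpace ℝ (Fin d),
      ‖u‖ ≤ r ∧ ⟪t - s, u⟫ = 0 ∧ x = p + u}


lemma dudley {α ι : Type*} [Fintype ι] (W : ι → α → ℝ) (Y : Finset α)
    (hY : ∀ A ⊆ Y, ∃ c : ι → ℝ, ∀ y ∈ Y, (0 ≤ ∑ p, c p * W p y) ↔ y ∈ A) :
    Y.card ≤ Fintype.card ι := by
  classical
  by_contra hn
  push_neg at hn
  have hli : ¬ LinearIndependent ℝ (fun (y : ↥Y) (p : ι) => W p y.1) := by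
    intro h
    have := h.fintype_card_le_finrank
    rw [Module.finrank_fintype_fun_eq_card] at this
    simp only [Fintype.card_coe] at this
    omega
  rw [Fintype.not_linearIndependent_iff] at hli
  obtain ⟨g, hsum, y₀, hy₀⟩ := hli
  obtain ⟨lam, hlsum, yneg, hyneg⟩ :
      ∃ lam : ↥Y → ℝ, (∑ y, lam y • (fun p : ι => W p y.1)) = 0 ∧ ∃ y, lam y < 0 := by
    by_cases hex : ∃ y, g y < 0
    · exact ⟨g, hsum, hex⟩
    · push_neg at hex
      refine ⟨-g, ?_, y₀, ?_⟩
      · have := congrArg Neg.neg hsum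
        simpa [neg_smul, ← Finset.sum_neg_distrib] using this
      · simp only [Pi.neg_apply, Left.neg_neg_iff]
        exact lt_of_le_of_ne (hex y₀) (Ne.symm hy₀)
  have hlp : ∀ p : ι, ∑ y, lam y * W p y.1 = 0 := by
    intro p
    have := congrFun hlsum p
    simpa using this
  set A : Finset α := (Y.attach.filter (fun y => 0 ≤ lam y)).image Subtype.val with hA
  have hAY : A ⊆ Y := by
    intro z hz
    simp only [hA, Finset.mem_image, Finset.mem_filter] at hz
    obtain ⟨y, _, rfl⟩ := hz
    exact y.2
  have hmemA : ∀ y : ↥Y, (y.1 ∈ A ↔ 0 ≤ lam y) := by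
    intro y
    simp only [hA, Finset.mem_image, Finset.mem_filter, Finset.mem_attach, true_and]
    constructor
    · rintro ⟨z, hz, hzy⟩
      exact Subtype.ext hzy ▸ hz
    · intro h; exact ⟨y, h, rfl⟩
  obtain ⟨c, hc⟩ := hY A hAY
  set G : ↥Y → ℝ := fun y => ∑ p, c p * W p y.1 with hG
  have hzero : ∑ y, lam y * G y = 0 := by
    have h1 : ∑ y, lam y * G y = ∑ p, c p * ∑ y, lam y * W p y.1 := by
      simp only [hG, Finset.mul_sum]
      rw [Finset.sum_comm]
      exact Finset.sum_congr rfl fun p _ => Finset.sum_congr rfl fun y _ => by ring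
    rw [h1]
    simp only [← Finset.univ_eq_attach, hlp, mul_zero, Finset.sum_const_zero]
  have hGiff : ∀ y : ↥Y, (0 ≤ G y) ↔ y.1 ∈ A := fun y => hc y.1 y.2
  have hpos : 0 < ∑ y, lam y * G y := by
    refine Finset.sum_pos' (fun y _ => ?_) ⟨yneg, Finset.mem_univ _, ?_⟩
    · by_cases h : 0 ≤ lam y
      · exact mul_nonneg h ((hGiff y).mpr ((hmemA y).mpr h))
      · push_neg at h
        have hGy : G y < 0 := by
          by_contra hge
          push_neg at hge
          exact absurd ((hmemA y).mp ((hGiff y).mp hge)) (not_le.mpr h)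
        exact le_of_lt (mul_pos_of_neg_of_neg h hGy)
    · have hGy : G yneg < 0 := by
        by_contra hge
        push_neg at hge
        exact absurd ((hmemA yneg).mp ((hGiff yneg).mp hge)) (by exact not_le.mpr hyneg)
      exact mul_pos_of_neg_of_neg hyneg hGy
  linarith

open Finset in
open scoped Classical in
lemma trace_card_le {α : Type*} (L : Set (Set α)) (m : ℕ)
    (hdim : ∀ Z : Finset α, Shatters L Z → Z.card ≤ m) (Y : Finset α) :
    (Y.powerset.filter (fun T => ∃ S ∈ L, T = Y.filter (fun y => y ∈ S))).card
      ≤ ∑ i ∈ Finset.range (m+1), Y.card.choose i := by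
  classical
  set 𝒯 := Y.powerset.filter (fun T => ∃ S ∈ L, T = Y.filter (fun y => y ∈ S)) with h𝒯
  have hsub : 𝒯.shatterer ⊆ (Finset.range (m+1)).biUnion (fun i => Y.powersetCard i) := by
    intro Z hZ
    rw [Finset.mem_shatterer] at hZ
    obtain ⟨u, hu, hsu⟩ := hZ (Finset.Subset.refl Z)
    have hZY : Z ⊆ Y := by
      have h1 : Z ⊆ u := by
        rw [← Finset.inter_eq_left, hsu]
      exact h1.trans (Finset.mem_powerset.1 (Finset.mem_filter.1 hu).1)
    have hShat : Shatters L Z := by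
      intro A hA
      obtain ⟨u', hu', hsu'⟩ := hZ hA
      obtain ⟨S, hS, hTS⟩ := (Finset.mem_filter.1 hu').2
      refine ⟨S, hS, fun y hy => ?_⟩
      have h1 : (y ∈ u') ↔ y ∈ A := by
        rw [← hsu']
        simp [Finset.mem_inter, hy]
      rw [← h1, hTS]
      simp [Finset.mem_filter, hZY hy]
    have hcard := hdim Z hShat
    simp only [Finset.mem_biUnion, Finset.mem_range, Finset.mem_powersetCard]
    exact ⟨Z.card, by omega, hZY, rfl⟩
  calc 𝒯.card ≤ 𝒯.shatterer.card := Finset.card_le_card_shatterer 𝒯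
    _ ≤ ((Finset.range (m+1)).biUnion fun i => Y.powersetCard i).card :=
        Finset.card_le_card hsub
    _ ≤ ∑ i ∈ Finset.range (m+1), (Y.powersetCard i).card := Finset.card_biUnion_le
    _ = ∑ i ∈ Finset.range (m+1), Y.card.choose i := by
        simp [Finset.card_powersetCard]

open Finset in
open scoped Classical in
lemma master_count {α ι : Type*} [Fintype ι] (k : ℕ) (W : ι → α → ℝ) (R : Set (Set α))
    (hR : ∀ B ∈ R, ∃ (F : Finset (Fin k → Bool)) (c : Fin k → ι → ℝ),
        B = {x | (fun i => decide (0 ≤ ∑ p, c i p * W p x)) ∈ F})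
    (Y : Finset α) (hY : Shatters R Y) :
    2 ^ Y.card ≤ 2 ^ (2 ^ k) *
      (∑ i ∈ Finset.range (Fintype.card ι + 1), Y.card.choose i) ^ k := by
  classical
  set L : Set (Set α) := {S | ∃ c : ι → ℝ, S = {x | 0 ≤ ∑ p, c p * W p x}} with hL
  set 𝒯 := Y.powerset.filter (fun T => ∃ S ∈ L, T = Y.filter (fun y => y ∈ S)) with h𝒯
  have hchoice : ∀ A ∈ Y.powerset, ∃ (F : Finset (Fin k → Bool)) (c : Fin k → ι → ℝ),
      ∀ y ∈ Y, (y ∈ A ↔ (fun i => decide (0 ≤ ∑ p, c i p * W p y)) ∈ F) := by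
    intro A hA
    obtain ⟨B, hBR, hBA⟩ := hY A (Finset.mem_powerset.1 hA)
    obtain ⟨F, c, hBeq⟩ := hR B hBR
    refine ⟨F, c, fun y hy => ?_⟩
    rw [← hBA y hy, hBeq]
    rfl
  choose F c hFc using hchoice
  have hrecover : ∀ A, ∀ hA : A ∈ Y.powerset,
      A = Y.filter (fun y =>
        (fun i => decide (y ∈ Y.filter (fun z => 0 ≤ ∑ p, c A hA i p * W p z))) ∈ F A hA) := by
    intro A hA
    ext z
    simp only [Finset.mem_filter]
    constructor
    · intro hz
      have hzY : z ∈ Y := Finset.mem_powerset.1 hA hz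
      refine ⟨hzY, ?_⟩
      have h2 := (hFc A hA z hzY).1 hz
      have hfun : (fun i => decide (0 ≤ ∑ p, c A hA i p * W p z))
          = (fun i => decide (z ∈ Y ∧ 0 ≤ ∑ p, c A hA i p * W p z)) := by
        funext i
        exact decide_eq_decide.mpr (by simp [hzY])
      rwa [hfun] at h2
    · rintro ⟨hzY, hmem⟩
      apply (hFc A hA z hzY).2
      have hfun : (fun i => decide (0 ≤ ∑ p, c A hA i p * W p z))
          = (fun i => decide (z ∈ Y ∧ 0 ≤ ∑ p, c A hA i p * W p z)) := by
        funext i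
        exact decide_eq_decide.mpr (by simp [hzY])
      rwa [hfun]
  set f : Finset α → Finset (Fin k → Bool) × (Fin k → Finset α) := fun A =>
    if hA : A ∈ Y.powerset then
      (F A hA, fun i => Y.filter (fun y => 0 ≤ ∑ p, c A hA i p * W p y))
    else (∅, fun _ => ∅) with hf
  have hmaps : ∀ A ∈ Y.powerset,
      f A ∈ (univ : Finset (Fin k → Bool)).powerset ×ˢ
        Fintype.piFinset (fun _ : Fin k => 𝒯) := by
    intro A hA
    rw [Finset.mem_product]
    constructor
    · simp [hf, hA, Finset.mem_powerset]
    · rw [Fintype.mem_piFinset]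
      intro i
      simp only [hf, hA, dif_pos]
      rw [h𝒯, Finset.mem_filter]
      refine ⟨Finset.mem_powerset.2 (Finset.filter_subset _ _), ?_⟩
      exact ⟨{x | 0 ≤ ∑ p, c A hA i p * W p x}, ⟨c A hA i, rfl⟩, by simp⟩
  have hinj : Set.InjOn f ↑Y.powerset := by
    intro A₁ h₁ A₂ h₂ heq
    rw [Finset.mem_coe] at h₁ h₂
    rw [hrecover A₁ h₁, hrecover A₂ h₂]
    have e1 : f A₁ = (F A₁ h₁, fun i => Y.filter (fun y => 0 ≤ ∑ p, c A₁ h₁ i p * W p y)) :=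
      dif_pos h₁
    have e2 : f A₂ = (F A₂ h₂, fun i => Y.filter (fun y => 0 ≤ ∑ p, c A₂ h₂ i p * W p y)) :=
      dif_pos h₂
    rw [e1, e2] at heq
    have hF : F A₁ h₁ = F A₂ h₂ := congrArg Prod.fst heq
    have hc : ∀ i, Y.filter (fun y => 0 ≤ ∑ p, c A₁ h₁ i p * W p y)
        = Y.filter (fun y => 0 ≤ ∑ p, c A₂ h₂ i p * W p y) := fun i =>
      congrFun (congrArg Prod.snd heq) i
    apply Finset.filter_congr
    intro y hy
    simp only [hF, hc]
  have hdim : ∀ Z : Finset α, Shatters L Z → Z.card ≤ Fintype.card ι := by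
    intro Z hZ
    apply dudley W
    intro A hA
    obtain ⟨B, hBL, hBA⟩ := hZ A hA
    obtain ⟨cc, rfl⟩ := hBL
    exact ⟨cc, fun y hy => by rw [← hBA y hy]; rfl⟩
  have h𝒯card : 𝒯.card ≤ ∑ i ∈ Finset.range (Fintype.card ι + 1), Y.card.choose i :=
    trace_card_le L (Fintype.card ι) hdim Y
  have hcard := Finset.card_le_card_of_injOn f hmaps hinj
  rw [Finset.card_powerset] at hcard
  rw [Finset.card_product, Fintype.card_piFinset] at hcard
  simp only [Finset.card_powerset, Finset.card_univ, Fintype.card_fun, Fintype.card_bool,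
    Fintype.card_fin, Finset.prod_const, Finset.card_univ] at hcard
  calc (2:ℕ) ^ Y.card ≤ 2 ^ 2 ^ k * 𝒯.card ^ k := hcard
    _ ≤ 2 ^ 2 ^ k * (∑ i ∈ Finset.range (Fintype.card ι + 1), Y.card.choose i) ^ k := by
        exact Nat.mul_le_mul_left _ (Nat.pow_le_pow_left h𝒯card k)

lemma sum_choose_le_vander (n m : ℕ) :
    ∑ i ∈ Finset.range (m+1), n.choose i ≤ (n+m).choose m := by
  rw [Nat.add_choose_eq, Finset.Nat.sum_antidiagonal_eq_sum_range_succ_mk]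
  apply Finset.sum_le_sum
  intro i hi
  exact Nat.le_mul_of_pos_right _ (Nat.choose_pos (Nat.sub_le m i))

lemma factorial_bound (m : ℕ) : (m:ℝ)^m ≤ Real.exp m * m.factorial := by
  have h1 : (m:ℝ)^m / m.factorial ≤ Real.exp m := by
    have h2 := Real.sum_le_exp_of_nonneg (x := (m:ℝ)) (by positivity) (m+1)
    refine le_trans ?_ h2
    exact Finset.single_le_sum (f := fun i => (m:ℝ)^i / i.factorial)
      (fun i _ => by positivity) (Finset.self_mem_range_succ m)
  have hf : (0:ℝ) < m.factorial := by positivity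
  calc (m:ℝ)^m = ((m:ℝ)^m / m.factorial) * m.factorial := by field_simp
    _ ≤ Real.exp m * m.factorial := by
        apply mul_le_mul_of_nonneg_right h1 hf.le


lemma arith_real (M N e1 z : ℝ) (hm : 1 ≤ M) (hn0 : 100000*M < N)
    (he1pos : 0 < e1) (he1lt : e1 < 2.7182818286) (hz : z = 2*e1*N/M) (hzpos : 0 < z)
    (hlog : N * Real.log 2 ≤ 1024 * Real.log 2 + 10 * (M * Real.log z)) : False := by
  have hnR : (100000:ℝ) ≤ N := by nlinarith
  have hlogz : Real.log z ≤ 2 * Real.sqrt z := by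
    have h1 : Real.log z = 2 * Real.log (Real.sqrt z) := by
      rw [Real.log_sqrt hzpos.le]; ring
    have h2 : Real.log (Real.sqrt z) ≤ Real.sqrt z - 1 :=
      Real.log_le_sub_one_of_pos (Real.sqrt_pos.mpr hzpos)
    nlinarith [Real.sqrt_nonneg z]
  have hkey : 20 * M * Real.sqrt z ≤ 0.15 * N := by
    have hsq : (20 * M * Real.sqrt z)^2 = 400 * M^2 * z := by
      rw [mul_pow, mul_pow, Real.sq_sqrt hzpos.le]; ring
    have hz2 : 400 * M^2 * z = 800 * e1 * M * N := by
      rw [hz]; field_simp; ring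
    have hsq2 : (20 * M * Real.sqrt z)^2 ≤ (0.15 * N)^2 := by
      rw [hsq, hz2]
      nlinarith [mul_pos (by nlinarith : (0:ℝ) < N) (by nlinarith : (0:ℝ) < N - 100000*M)]
    nlinarith [Real.sqrt_nonneg z, hnR, hm]
  have hml : 10 * M * Real.log z ≤ 20 * M * Real.sqrt z := by
    have := mul_le_mul_of_nonneg_left hlogz (by nlinarith : (0:ℝ) ≤ 10*M)
    nlinarith
  nlinarith [Real.log_two_gt_d9, Real.log_two_lt_d9, hlog, hml, hkey, hnR]

lemma arith_main (m n : ℕ) (hm : 1 ≤ m)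
    (h : 2^n ≤ 2^(2^10) * (∑ i ∈ Finset.range (m+1), n.choose i)^10) :
    n ≤ 100000 * m := by
  by_contra hn
  push_neg at hn
  have hmn : m ≤ n := by omega
  have hn0 : (100000:ℝ) * m < n := by exact_mod_cast hn
  have hmR : (1:ℝ) ≤ m := by exact_mod_cast hm
  have hnR : (100000:ℝ) ≤ n := by nlinarith
  set e1 : ℝ := Real.exp 1 with he1
  have he1pos : 0 < e1 := Real.exp_pos 1
  have he1lt : e1 < 2.7182818286 := Real.exp_one_lt_d9
  have he1gt : (1:ℝ) < e1 := by
    have := Real.add_one_le_exp (1:ℝ)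
    nlinarith
  clear_value e1
  set z : ℝ := 2 * e1 * n / m with hz
  clear_value z
  have hzpos : 0 < z := by
    rw [hz]
    apply div_pos (by nlinarith) (by nlinarith)
  have hA : (0:ℝ) ≤ (n:ℝ)+m := by positivity
  have hfb : (m:ℝ)^m ≤ e1^m * m.factorial := by
    have := factorial_bound m
    rw [he1]
    rwa [← Real.exp_one_pow] at this
  have hS : ((∑ i ∈ Finset.range (m+1), n.choose i : ℕ) : ℝ) ≤ z ^ m := by
    have h1 : ((∑ i ∈ Finset.range (m+1), n.choose i : ℕ) : ℝ) ≤ ((n+m).choose m : ℝ) := by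
      exact_mod_cast sum_choose_le_vander n m
    have h2 : ((n+m).choose m : ℝ) ≤ ((n:ℝ)+m)^m / m.factorial := by
      have := Nat.choose_le_pow_div (α := ℝ) m (n+m)
      push_cast at this
      convert this using 2
    have h3 : ((n:ℝ)+m)^m / m.factorial ≤ (e1 * ((n:ℝ)+m) / m)^m := by
      rw [div_pow, mul_pow, div_le_div_iff₀ (by positivity) (by positivity)]
      nlinarith [mul_le_mul_of_nonneg_left hfb (pow_nonneg hA m)]
    have h4 : (e1 * ((n:ℝ)+m) / m)^m ≤ z^m := by
      apply pow_le_pow_left₀ (by positivity)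
      rw [hz, div_le_div_iff₀ (by positivity) (by positivity)]
      have hmn' : (m:ℝ) ≤ n := by exact_mod_cast hmn
      nlinarith [mul_nonneg (mul_nonneg he1pos.le (by positivity : (0:ℝ) ≤ (m:ℝ)))
        (by linarith : (0:ℝ) ≤ (n:ℝ)-(m:ℝ))]
    linarith
  have h2R : (2:ℝ)^n ≤ 2^(2^10) * (z^m)^10 := by
    have hcast : (2:ℝ)^n ≤ 2^(2^10) *
        (((∑ i ∈ Finset.range (m+1), n.choose i : ℕ)):ℝ)^10 := by exact_mod_cast h
    calc (2:ℝ)^n ≤ 2^(2^10) * (((∑ i ∈ Finset.range (m+1), n.choose i : ℕ)):ℝ)^10 := hcast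
      _ ≤ 2^(2^10) * (z^m)^10 := by
          apply mul_le_mul_of_nonneg_left _ (by positivity)
          exact pow_le_pow_left₀ (by positivity) hS 10
  clear h
  have hlog := Real.log_le_log (by positivity) h2R
  rw [Real.log_pow, Real.log_mul (by positivity) (by positivity),
    Real.log_pow, Real.log_pow] at hlog
  push_cast at hlog
  norm_num at hlog
  exact arith_real (m:ℝ) (n:ℝ) e1 z hmR hn0 he1pos he1lt hz hzpos hlog

abbrev Idx (d : ℕ) := Unit ⊕ (Fin d ⊕ Fin d × Fin d)

def feat {d : ℕ} : Idx d → EuclideanSpace ℝ (Fin d) → ℝ := fun p x =>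
  match p with
  | .inl _ => 1
  | .inr (.inl i) => x i
  | .inr (.inr ij) => x ij.1 * x ij.2

def ccoef {d : ℕ} (c ρ σ : ℝ) (w v : EuclideanSpace ℝ (Fin d)) : Idx d → ℝ := fun p =>
  match p with
  | .inl _ => c
  | .inr (.inl i) => w i
  | .inr (.inr ij) => σ * v ij.1 * v ij.2 + (if ij.1 = ij.2 then ρ else 0)

lemma euclid_inner_sum {d : ℕ} (w x : EuclideanSpace ℝ (Fin d)) : ⟪w, x⟫ = ∑ i, w i * x i := by
  simp [PiLp.inner_apply, RCLike.inner_apply, conj_trivial]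
  exact Finset.sum_congr rfl fun i _ => mul_comm _ _

lemma normsq_sum {d : ℕ} (x : EuclideanSpace ℝ (Fin d)) : ‖x‖^2 = ∑ i, x i * x i := by
  rw [← real_inner_self_eq_norm_sq, euclid_inner_sum]

lemma expand {d : ℕ} (c ρ σ : ℝ) (w v x : EuclideanSpace ℝ (Fin d)) :
    ∑ p, ccoef c ρ σ w v p * feat p x = c + ⟪w, x⟫ + ρ * ‖x‖^2 + σ * ⟪v, x⟫^2 := by
  classical
  rw [Fintype.sum_sum_type, Fintype.sum_sum_type]
  rw [euclid_inner_sum w x, euclid_inner_sum v x, normsq_sum]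
  simp only [feat, ccoef]
  rw [Fintype.sum_prod_type]
  have hsplit : ∀ i, (∑ j, (σ * v i * v j + if i = j then ρ else 0) * (x i * x j))
      = (σ * ∑ j, v j * x j) * (v i * x i) + ρ * (x i * x i) := by
    intro i
    have h1 : ∀ j, (σ * v i * v j + if i = j then ρ else 0) * (x i * x j)
        = (σ * (v i * x i)) * (v j * x j) + (if i = j then ρ * (x i * x j) else 0) := by
      intro j
      by_cases h : i = j <;> simp [h] <;> ring
    simp only [h1]
    rw [Finset.sum_add_distrib, ← Finset.mul_sum, Finset.sum_ite_eq]
    simp only [Finset.mem_univ, if_true]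
    ring
  simp only [hsplit]
  have eA : ∑ i : Fin d, ((σ * ∑ j, v j * x j) * (v i * x i) + ρ * (x i * x i))
      = (σ * ∑ j, v j * x j) * (∑ i, v i * x i) + ρ * ∑ i, x i * x i := by
    rw [Finset.sum_add_distrib, ← Finset.mul_sum, ← Finset.mul_sum]
  rw [eA]
  simp only [Finset.univ_unique, Finset.sum_singleton]
  ring

section Atoms

variable {d : ℕ}

local notation "E" => EuclideanSpace ℝ (Fin d)

lemma nss (y z : E) : ‖y - z‖^2 = ‖y‖^2 - 2*⟪z,y⟫ + ‖z‖^2 := by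
  rw [norm_sub_sq_real, real_inner_comm]

noncomputable def atomVal (θ : (E × E) × ℝ) (x : E) : Fin 10 → ℝ := fun i =>
  match i with
  | ⟨0,_⟩ => θ.2
  | ⟨1,_⟩ => -‖θ.1.2-θ.1.1‖^2
  | ⟨2,_⟩ => θ.2^2 - ‖x-θ.1.1‖^2
  | ⟨3,_⟩ => θ.2^2 - ‖x-θ.1.2‖^2
  | ⟨4,_⟩ => ⟪θ.1.2-θ.1.1, x-θ.1.1⟫
  | ⟨5,_⟩ => ‖θ.1.2-θ.1.1‖^2 - ⟪θ.1.2-θ.1.1, x-θ.1.1⟫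
  | ⟨6,_⟩ => θ.2^2*‖θ.1.2-θ.1.1‖^2 - ‖x-θ.1.1‖^2*‖θ.1.2-θ.1.1‖^2 + ⟪θ.1.2-θ.1.1, x-θ.1.1⟫^2
  | ⟨7,_⟩ => ⟪θ.1.2-θ.1.1, x-θ.1.1⟫^2 - ‖x-θ.1.1‖^2*‖θ.1.2-θ.1.1‖^2
  | ⟨8,_⟩ => -‖x-θ.1.1‖^2
  | ⟨9,_⟩ => -‖x-θ.1.2‖^2

noncomputable def atomCoef (θ : (E × E) × ℝ) : Fin 10 → Idx d → ℝ := fun i =>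
  match i with
  | ⟨0,_⟩ => ccoef θ.2 0 0 0 0
  | ⟨1,_⟩ => ccoef (-‖θ.1.2-θ.1.1‖^2) 0 0 0 0
  | ⟨2,_⟩ => ccoef (θ.2^2-‖θ.1.1‖^2) (-1) 0 ((2:ℝ)•θ.1.1) 0
  | ⟨3,_⟩ => ccoef (θ.2^2-‖θ.1.2‖^2) (-1) 0 ((2:ℝ)•θ.1.2) 0
  | ⟨4,_⟩ => ccoef (-⟪θ.1.2-θ.1.1, θ.1.1⟫) 0 0 (θ.1.2-θ.1.1) 0
  | ⟨5,_⟩ => ccoef (‖θ.1.2-θ.1.1‖^2+⟪θ.1.2-θ.1.1, θ.1.1⟫) 0 0 (-(θ.1.2-θ.1.1)) 0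
  | ⟨6,_⟩ => ccoef (θ.2^2*‖θ.1.2-θ.1.1‖^2 - ‖θ.1.2-θ.1.1‖^2*‖θ.1.1‖^2 + ⟪θ.1.2-θ.1.1, θ.1.1⟫^2)
      (-‖θ.1.2-θ.1.1‖^2) 1
      ((2*‖θ.1.2-θ.1.1‖^2)•θ.1.1 - (2*⟪θ.1.2-θ.1.1, θ.1.1⟫)•(θ.1.2-θ.1.1)) (θ.1.2-θ.1.1)
  | ⟨7,_⟩ => ccoef (-(‖θ.1.2-θ.1.1‖^2*‖θ.1.1‖^2) + ⟪θ.1.2-θ.1.1, θ.1.1⟫^2)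
      (-‖θ.1.2-θ.1.1‖^2) 1
      ((2*‖θ.1.2-θ.1.1‖^2)•θ.1.1 - (2*⟪θ.1.2-θ.1.1, θ.1.1⟫)•(θ.1.2-θ.1.1)) (θ.1.2-θ.1.1)
  | ⟨8,_⟩ => ccoef (-‖θ.1.1‖^2) (-1) 0 ((2:ℝ)•θ.1.1) 0
  | ⟨9,_⟩ => ccoef (-‖θ.1.2‖^2) (-1) 0 ((2:ℝ)•θ.1.2) 0

lemma atom_expand (θ : (E × E) × ℝ) (x : E) (i : Fin 10) :
    ∑ p, atomCoef θ i p * feat p x = atomVal θ x i := by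
  obtain ⟨⟨s,t⟩,r⟩ := θ
  fin_cases i <;>
    (simp only [atomCoef, atomVal]; rw [expand]) <;>
    (simp only [nss x s, nss x t, inner_sub_left, inner_sub_right, real_inner_smul_left,
      inner_zero_left, inner_zero_right, inner_neg_left, real_inner_self_eq_norm_sq]) <;>
    ring

end Atoms

section Geom

variable {d : ℕ}

local notation "E" => EuclideanSpace ℝ (Fin d)

lemma norm_le_iff_sq {r : ℝ} (hr : 0 ≤ r) (y : E) : ‖y‖ ≤ r ↔ ‖y‖^2 ≤ r^2 :=
  (pow_le_pow_iff_left₀ (norm_nonneg y) hr two_ne_zero).symm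

lemma dist_par (s t x : E) (lam : ℝ) :
    ‖x - (s + lam • (t - s))‖^2
      = ‖x - s‖^2 - 2*lam*⟪t - s, x - s⟫ + lam^2*‖t - s‖^2 := by
  have h0 : x - (s + lam • (t - s)) = (x - s) - lam • (t - s) := by abel
  rw [h0, norm_sub_sq_real, real_inner_smul_right, norm_smul]
  rw [mul_pow, Real.norm_eq_abs, sq_abs]
  rw [real_inner_comm]
  ring

lemma vzero_of_L_nonpos {s t : E} (hL : ‖t - s‖^2 ≤ 0) : t - s = 0 := by
  have h1 : ‖t - s‖ = 0 := by nlinarith [norm_nonneg (t - s), sq_nonneg (‖t - s‖)]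
  exact norm_eq_zero.1 h1

lemma cylinder_iff (s t x : E) (r : ℝ) :
    x ∈ cylinder s t r ↔ (0 ≤ r ∧
      ((‖t-s‖^2 ≤ 0 ∧ ‖x-s‖^2 ≤ r^2) ∨
       (0 < ‖t-s‖^2 ∧ ‖x-s‖^2*‖t-s‖^2 - ⟪t-s, x-s⟫^2 ≤ r^2*‖t-s‖^2))) := by
  constructor
  · rintro ⟨p, ⟨lam, rfl⟩, hle⟩
    have hr : 0 ≤ r := le_trans (norm_nonneg _) hle
    refine ⟨hr, ?_⟩
    have hsq : ‖x - (s + lam • (t - s))‖^2 ≤ r^2 := (norm_le_iff_sq hr _).1 hle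
    rw [dist_par] at hsq
    by_cases hL : ‖t-s‖^2 ≤ 0
    · left
      refine ⟨hL, ?_⟩
      have hv := vzero_of_L_nonpos hL
      rw [hv] at hsq
      simpa using hsq
    · right
      push_neg at hL
      refine ⟨hL, ?_⟩
      nlinarith [sq_nonneg (lam*‖t-s‖^2 - ⟪t-s, x-s⟫)]
  · rintro ⟨hr, ⟨hL, hq⟩ | ⟨hL, hq⟩⟩
    · refine ⟨s, ⟨0, by simp⟩, ?_⟩
      rw [norm_le_iff_sq hr]
      exact hq
    · set lam := ⟪t-s, x-s⟫ / ‖t-s‖^2 with hlam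
      refine ⟨s + lam • (t-s), ⟨lam, rfl⟩, ?_⟩
      rw [norm_le_iff_sq hr, dist_par]
      have hml : lam * ‖t-s‖^2 = ⟪t-s, x-s⟫ := div_mul_cancel₀ _ hL.ne'
      nlinarith [hq, hL, hml]

lemma cappedCylinder_iff (s t x : E) (r : ℝ) :
    x ∈ cappedCylinder s t r ↔ (0 ≤ r ∧
      ((‖t-s‖^2 ≤ 0 ∧ ‖x-s‖^2 ≤ r^2) ∨
       (0 < ‖t-s‖^2 ∧ 0 ≤ ⟪t-s, x-s⟫ ∧ ⟪t-s, x-s⟫ ≤ ‖t-s‖^2 ∧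
        ‖x-s‖^2*‖t-s‖^2 - ⟪t-s, x-s⟫^2 ≤ r^2*‖t-s‖^2))) := by
  constructor
  · rintro ⟨p, hp, u, hu, hperp, rfl⟩
    have hr : 0 ≤ r := le_trans (norm_nonneg _) hu
    refine ⟨hr, ?_⟩
    rw [segment_eq_image'] at hp
    obtain ⟨lam, ⟨hl0, hl1⟩, rfl⟩ := hp
    beta_reduce
    have hxs : s + lam • (t - s) + u - s = lam • (t - s) + u := by abel
    have ha : ⟪t-s, s + lam • (t - s) + u - s⟫ = lam * ‖t-s‖^2 := by
      rw [hxs, inner_add_right, real_inner_smul_right, hperp, real_inner_self_eq_norm_sq]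
      ring
    have hq : ‖s + lam • (t - s) + u - s‖^2 = lam^2*‖t-s‖^2 + ‖u‖^2 := by
      rw [hxs, norm_add_sq_real, real_inner_smul_left, hperp, norm_smul,
        mul_pow, Real.norm_eq_abs, sq_abs]
      ring
    have husq : ‖u‖^2 ≤ r^2 := (norm_le_iff_sq hr _).1 hu
    by_cases hL : ‖t-s‖^2 ≤ 0
    · left
      refine ⟨hL, ?_⟩
      have hL0 : ‖t-s‖^2 = 0 := le_antisymm hL (sq_nonneg _)
      rw [hq, hL0]
      nlinarith
    · right
      push_neg at hL
      refine ⟨hL, ?_, ?_, ?_⟩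
      · rw [ha]; exact mul_nonneg hl0 (sq_nonneg _)
      · rw [ha]; nlinarith
      · rw [ha, hq]; nlinarith
  · rintro ⟨hr, ⟨hL, hq⟩ | ⟨hL, ha0, haL, hq⟩⟩
    · have hv := vzero_of_L_nonpos hL
      refine ⟨s, left_mem_segment ℝ s t, x - s, ?_, ?_, ?_⟩
      · rw [norm_le_iff_sq hr]; exact hq
      · rw [hv, inner_zero_left]
      · abel
    · set lam := ⟪t-s, x-s⟫ / ‖t-s‖^2 with hlam
      have hml : lam * ‖t-s‖^2 = ⟪t-s, x-s⟫ := div_mul_cancel₀ _ hL.ne'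
      refine ⟨s + lam • (t-s), ?_, x - (s + lam • (t-s)), ?_, ?_, by abel⟩
      · rw [segment_eq_image']
        refine ⟨lam, ⟨div_nonneg ha0 hL.le, ?_⟩, rfl⟩
        rw [hlam, div_le_one hL]
        exact haL
      · rw [norm_le_iff_sq hr, dist_par]
        nlinarith [hq, hL, hml]
      · have h0 : x - (s + lam • (t - s)) = (x - s) - lam • (t - s) := by abel
        rw [h0, inner_sub_right, real_inner_smul_right, real_inner_self_eq_norm_sq]
        rw [hml, sub_self]

end Geom

section Geom2

variable {d : ℕ}

local notation "E" => EuclideanSpace ℝ (Fin d)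

lemma isCompact_seg (s t : E) : IsCompact (segment ℝ s t) := by
  rw [segment_eq_image']
  exact isCompact_Icc.image (by fun_prop)

lemma mem_cthick_iff {S : Set E} (hS : IsCompact S) (hne : S.Nonempty) {r : ℝ} (hr : 0 ≤ r)
    (x : E) : x ∈ Metric.cthickening r S ↔ ∃ p ∈ S, dist x p ≤ r := by
  constructor
  · intro h
    rw [Metric.mem_cthickening_iff] at h
    obtain ⟨p, hp, hed⟩ := hS.exists_infEdist_eq_edist hne x
    refine ⟨p, hp, ?_⟩
    rw [hed, edist_dist] at h
    exact (ENNReal.ofReal_le_ofReal_iff hr).1 h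
  · rintro ⟨p, hp, hd⟩
    exact Metric.mem_cthickening_of_dist_le x p r S hp hd

lemma norm_xt (s t x : E) : ‖x - t‖^2 = ‖x - s‖^2 - 2*⟪t - s, x - s⟫ + ‖t - s‖^2 := by
  have h := dist_par s t x 1
  simpa using h

lemma stadium_iff (s t x : E) (r : ℝ) :
    x ∈ stadium s t r ↔
      (‖x-s‖^2 ≤ (max 0 r)^2 ∨ ‖x-t‖^2 ≤ (max 0 r)^2 ∨
       (0 < ‖t-s‖^2 ∧ 0 ≤ ⟪t-s, x-s⟫ ∧ ⟪t-s, x-s⟫ ≤ ‖t-s‖^2 ∧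
        ‖x-s‖^2*‖t-s‖^2 - ⟪t-s, x-s⟫^2 ≤ (max 0 r)^2*‖t-s‖^2)) := by
  have hr0 : (0:ℝ) ≤ max 0 r := le_max_left 0 r
  have hmem : x ∈ stadium s t r ↔ ∃ p ∈ segment ℝ s t, dist x p ≤ max 0 r := by
    rw [stadium, ← Metric.cthickening_max_zero]
    exact mem_cthick_iff (isCompact_seg s t) ⟨s, left_mem_segment ℝ s t⟩ hr0 x
  rw [hmem]
  constructor
  · rintro ⟨p, hp, hd⟩
    rw [segment_eq_image'] at hp
    obtain ⟨lam, ⟨hl0, hl1⟩, rfl⟩ := hp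
    beta_reduce at hd
    rw [dist_eq_norm, norm_le_iff_sq hr0, dist_par] at hd
    by_cases hL : ‖t-s‖^2 ≤ 0
    · left
      have hv := vzero_of_L_nonpos hL
      rw [hv] at hd
      simpa using hd
    · push_neg at hL
      by_cases ha : ⟪t-s, x-s⟫ < 0
      · left
        nlinarith [mul_nonneg hl0 (neg_nonneg.2 ha.le), mul_nonneg (mul_nonneg hl0 hl0) hL.le]
      · push_neg at ha
        by_cases ha2 : ‖t-s‖^2 < ⟪t-s, x-s⟫
        · right; left
          rw [norm_xt s t x]
          nlinarith [mul_nonneg (sub_nonneg.2 hl1) (by nlinarith :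
            (0:ℝ) ≤ 2*⟪t-s, x-s⟫ - ‖t-s‖^2*(1+lam))]
        · push_neg at ha2
          right; right
          refine ⟨hL, ha, ha2, ?_⟩
          nlinarith [sq_nonneg (lam*‖t-s‖^2 - ⟪t-s, x-s⟫)]
  · rintro (h | h | ⟨hL, ha0, haL, hq⟩)
    · exact ⟨s, left_mem_segment ℝ s t, by
        rw [dist_eq_norm, norm_le_iff_sq hr0]; exact h⟩
    · exact ⟨t, right_mem_segment ℝ s t, by
        rw [dist_eq_norm, norm_le_iff_sq hr0]; exact h⟩
    · set lam := ⟪t-s, x-s⟫ / ‖t-s‖^2 with hlam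
      have hml : lam * ‖t-s‖^2 = ⟪t-s, x-s⟫ := div_mul_cancel₀ _ hL.ne'
      refine ⟨s + lam • (t-s), ?_, ?_⟩
      · rw [segment_eq_image']
        exact ⟨lam, ⟨div_nonneg ha0 hL.le, by rw [hlam, div_le_one hL]; exact haL⟩, rfl⟩
      · rw [dist_eq_norm, norm_le_iff_sq hr0, dist_par]
        nlinarith [hq, hL, hml]

lemma ball_iff (p x : E) (r : ℝ) :
    x ∈ Metric.closedBall p r ↔ (0 ≤ r ∧ ‖x - p‖^2 ≤ r^2) := by
  rw [Metric.mem_closedBall, dist_eq_norm]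
  constructor
  · intro h
    have hr : 0 ≤ r := le_trans (norm_nonneg _) h
    exact ⟨hr, (norm_le_iff_sq hr _).1 h⟩
  · rintro ⟨hr, h⟩
    exact (norm_le_iff_sq hr _).2 h

end Geom2

section Preds

def PredBall (A : Fin 10 → Prop) : Prop := A 0 ∧ A 2
def PredCyl (A : Fin 10 → Prop) : Prop := A 0 ∧ ((A 1 ∧ A 2) ∨ (¬A 1 ∧ A 6))
def PredCap (A : Fin 10 → Prop) : Prop :=
  A 0 ∧ ((A 1 ∧ A 2) ∨ (¬A 1 ∧ A 4 ∧ A 5 ∧ A 6))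
def PredStad (A : Fin 10 → Prop) : Prop :=
  (A 0 ∧ (A 2 ∨ A 3 ∨ (¬A 1 ∧ A 4 ∧ A 5 ∧ A 6))) ∨
  (¬A 0 ∧ (A 8 ∨ A 9 ∨ (¬A 1 ∧ A 4 ∧ A 5 ∧ A 7)))

open scoped Classical in
noncomputable def FOf (P : (Fin 10 → Prop) → Prop) : Finset (Fin 10 → Bool) :=
  Finset.univ.filter (fun b => P (fun i => b i = true))

lemma mem_FOf_iff (P : (Fin 10 → Prop) → Prop) (g : Fin 10 → ℝ) :
    ((fun i => decide (0 ≤ g i)) ∈ FOf P) ↔ P (fun i => 0 ≤ g i) := by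
  classical
  rw [FOf, Finset.mem_filter]
  simp only [Finset.mem_univ, true_and, decide_eq_true_eq]

end Preds

section Chars

variable {d : ℕ}

local notation "E" => EuclideanSpace ℝ (Fin d)

lemma atomVal0 (θ : (E × E) × ℝ) (x : E) : atomVal θ x 0 = θ.2 := rfl
lemma atomVal1 (θ : (E × E) × ℝ) (x : E) : atomVal θ x 1 = -‖θ.1.2-θ.1.1‖^2 := rfl
lemma atomVal2 (θ : (E × E) × ℝ) (x : E) : atomVal θ x 2 = θ.2^2 - ‖x-θ.1.1‖^2 := rfl
lemma atomVal3 (θ : (E × E) × ℝ) (x : E) : atomVal θ x 3 = θ.2^2 - ‖x-θ.1.2‖^2 := rfl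
lemma atomVal4 (θ : (E × E) × ℝ) (x : E) : atomVal θ x 4 = ⟪θ.1.2-θ.1.1, x-θ.1.1⟫ := rfl
lemma atomVal5 (θ : (E × E) × ℝ) (x : E) :
    atomVal θ x 5 = ‖θ.1.2-θ.1.1‖^2 - ⟪θ.1.2-θ.1.1, x-θ.1.1⟫ := rfl
lemma atomVal6 (θ : (E × E) × ℝ) (x : E) :
    atomVal θ x 6 = θ.2^2*‖θ.1.2-θ.1.1‖^2 - ‖x-θ.1.1‖^2*‖θ.1.2-θ.1.1‖^2
      + ⟪θ.1.2-θ.1.1, x-θ.1.1⟫^2 := rfl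
lemma atomVal7 (θ : (E × E) × ℝ) (x : E) :
    atomVal θ x 7 = ⟪θ.1.2-θ.1.1, x-θ.1.1⟫^2 - ‖x-θ.1.1‖^2*‖θ.1.2-θ.1.1‖^2 := rfl
lemma atomVal8 (θ : (E × E) × ℝ) (x : E) : atomVal θ x 8 = -‖x-θ.1.1‖^2 := rfl
lemma atomVal9 (θ : (E × E) × ℝ) (x : E) : atomVal θ x 9 = -‖x-θ.1.2‖^2 := rfl

lemma stad_char (s t x : E) (r : ℝ) :
    x ∈ stadium s t r ↔ PredStad (fun i => 0 ≤ atomVal ((s,t),r) x i) := by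
  rw [stadium_iff]
  unfold PredStad
  simp only [atomVal0, atomVal1, atomVal2, atomVal3, atomVal4, atomVal5, atomVal6,
    atomVal7, atomVal8, atomVal9]
  have hLnn : (0:ℝ) ≤ ‖t-s‖^2 := sq_nonneg _
  have h1 : ¬(0 ≤ -‖t-s‖^2) ↔ 0 < ‖t-s‖^2 := by
    rw [neg_nonneg, not_le]
  by_cases hr : 0 ≤ r
  · rw [max_eq_right hr]
    constructor
    · rintro (h | h | ⟨hL, h4, h5, h6⟩)
      · exact Or.inl ⟨hr, Or.inl (by linarith)⟩
      · exact Or.inl ⟨hr, Or.inr (Or.inl (by linarith))⟩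
      · exact Or.inl ⟨hr, Or.inr (Or.inr ⟨h1.2 hL, h4, by linarith, by linarith⟩)⟩
    · rintro (⟨_, h | h | ⟨hL, h4, h5, h6⟩⟩ | ⟨hneg, _⟩)
      · exact Or.inl (by linarith)
      · exact Or.inr (Or.inl (by linarith))
      · exact Or.inr (Or.inr ⟨h1.1 hL, h4, by linarith, by linarith⟩)
      · exact absurd hr hneg
  · have hr' : r ≤ 0 := le_of_not_ge hr
    rw [max_eq_left hr']
    constructor
    · rintro (h | h | ⟨hL, h4, h5, h6⟩)
      · refine Or.inr ⟨hr, Or.inl (by nlinarith)⟩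
      · exact Or.inr ⟨hr, Or.inr (Or.inl (by nlinarith))⟩
      · exact Or.inr ⟨hr, Or.inr (Or.inr ⟨h1.2 hL, h4, by linarith, by nlinarith⟩)⟩
    · rintro (⟨habs, _⟩ | ⟨_, h | h | ⟨hL, h4, h5, h6⟩⟩)
      · exact absurd habs hr
      · exact Or.inl (by nlinarith)
      · exact Or.inr (Or.inl (by nlinarith))
      · exact Or.inr (Or.inr ⟨h1.1 hL, h4, by linarith, by nlinarith⟩)

lemma cyl_char (s t x : E) (r : ℝ) :
    x ∈ cylinder s t r ↔ PredCyl (fun i => 0 ≤ atomVal ((s,t),r) x i) := by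
  rw [cylinder_iff]
  unfold PredCyl
  simp only [atomVal0, atomVal1, atomVal2, atomVal6]
  have h1 : ¬(0 ≤ -‖t-s‖^2) ↔ 0 < ‖t-s‖^2 := by rw [neg_nonneg, not_le]
  constructor
  · rintro ⟨hr, ⟨hL, h⟩ | ⟨hL, h⟩⟩
    · exact ⟨hr, Or.inl ⟨neg_nonneg.2 hL, by linarith⟩⟩
    · exact ⟨hr, Or.inr ⟨h1.2 hL, by linarith⟩⟩
  · rintro ⟨hr, ⟨hL, h⟩ | ⟨hL, h⟩⟩
    · exact ⟨hr, Or.inl ⟨neg_nonneg.1 hL, by linarith⟩⟩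
    · exact ⟨hr, Or.inr ⟨h1.1 hL, by linarith⟩⟩

lemma cap_char (s t x : E) (r : ℝ) :
    x ∈ cappedCylinder s t r ↔ PredCap (fun i => 0 ≤ atomVal ((s,t),r) x i) := by
  rw [cappedCylinder_iff]
  unfold PredCap
  simp only [atomVal0, atomVal1, atomVal2, atomVal4, atomVal5, atomVal6]
  have h1 : ¬(0 ≤ -‖t-s‖^2) ↔ 0 < ‖t-s‖^2 := by rw [neg_nonneg, not_le]
  constructor
  · rintro ⟨hr, ⟨hL, h⟩ | ⟨hL, h4, h5, h⟩⟩
    · exact ⟨hr, Or.inl ⟨neg_nonneg.2 hL, by linarith⟩⟩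
    · exact ⟨hr, Or.inr ⟨h1.2 hL, h4, by linarith, by linarith⟩⟩
  · rintro ⟨hr, ⟨hL, h⟩ | ⟨hL, h4, h5, h⟩⟩
    · exact ⟨hr, Or.inl ⟨neg_nonneg.1 hL, by linarith⟩⟩
    · exact ⟨hr, Or.inr ⟨h1.1 hL, h4, by linarith, by linarith⟩⟩

end Chars


section BallAtoms

variable {d : ℕ}

local notation "E" => EuclideanSpace ℝ (Fin d)

noncomputable def batomVal (θ : E × ℝ) (x : E) : Fin 10 → ℝ := fun i =>
  match i with
  | ⟨0,_⟩ => θ.2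
  | ⟨2,_⟩ => θ.2^2 - ‖x-θ.1‖^2
  | _ => 0

noncomputable def batomCoef (θ : E × ℝ) : Fin 10 → Idx d → ℝ := fun i =>
  match i with
  | ⟨0,_⟩ => ccoef θ.2 0 0 0 0
  | ⟨2,_⟩ => ccoef (θ.2^2-‖θ.1‖^2) (-1) 0 ((2:ℝ)•θ.1) 0
  | _ => ccoef 0 0 0 0 0

lemma batom_expand (θ : E × ℝ) (x : E) (i : Fin 10) :
    ∑ p, batomCoef θ i p * feat p x = batomVal θ x i := by
  obtain ⟨ct, r⟩ := θ
  fin_cases i <;>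
    (simp only [batomCoef, batomVal]; rw [expand]) <;>
    (simp only [nss x ct, inner_sub_left, inner_sub_right, real_inner_smul_left,
      inner_zero_left, inner_zero_right, inner_neg_left, real_inner_self_eq_norm_sq]) <;>
    ring

lemma ball_char (p x : E) (r : ℝ) :
    x ∈ Metric.closedBall p r ↔ PredBall (fun i => 0 ≤ batomVal (p,r) x i) := by
  rw [ball_iff]
  unfold PredBall
  beta_reduce
  have h0 : batomVal (p,r) x 0 = r := rfl
  have h2 : batomVal (p,r) x 2 = r^2 - ‖x-p‖^2 := rfl
  rw [h0, h2]
  constructor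
  · rintro ⟨hr, h⟩; exact ⟨hr, by linarith⟩
  · rintro ⟨hr, h⟩; exact ⟨hr, by linarith⟩

lemma dual_sum (θ : (E × E) × ℝ) (x : E) (i : Fin 10) :
    ∑ q : Fin 10 × Idx d, (if q.1 = i then feat q.2 x else 0) * atomCoef θ q.1 q.2
      = atomVal θ x i := by
  rw [Fintype.sum_prod_type]
  rw [Finset.sum_eq_single i]
  · simp only [if_pos rfl]
    rw [← atom_expand θ x i]
    exact Finset.sum_congr rfl fun p _ => mul_comm _ _
  · intro j _ hj
    simp [hj]
  · intro h
    exact absurd (Finset.mem_univ i) h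

lemma bdual_sum (θ : E × ℝ) (x : E) (i : Fin 10) :
    ∑ q : Fin 10 × Idx d, (if q.1 = i then feat q.2 x else 0) * batomCoef θ q.1 q.2
      = batomVal θ x i := by
  rw [Fintype.sum_prod_type]
  rw [Finset.sum_eq_single i]
  · simp only [if_pos rfl]
    rw [← batom_expand θ x i]
    exact Finset.sum_congr rfl fun p _ => mul_comm _ _
  · intro j _ hj
    simp [hj]
  · intro h
    exact absurd (Finset.mem_univ i) h

end BallAtoms

lemma master_vc {α ι : Type*} [Fintype ι] [Nonempty ι] (W : ι → α → ℝ) (R : Set (Set α))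
    (hR : ∀ B ∈ R, ∃ (F : Finset (Fin 10 → Bool)) (c : Fin 10 → ι → ℝ),
        B = {x | (fun i => decide (0 ≤ ∑ p, c i p * W p x)) ∈ F})
    (Y : Finset α) (hY : Shatters R Y) : Y.card ≤ 100000 * Fintype.card ι :=
  arith_main _ _ Fintype.card_pos (master_count 10 W R hR Y hY)

lemma card_Idx (d : ℕ) (hd : 1 ≤ d) : Fintype.card (Idx d) ≤ 30*(d*d) := by
  simp only [Idx, Fintype.card_sum, Fintype.card_prod, Fintype.card_fin, Fintype.card_unit]
  nlinarith

lemma card_dualIdx (d : ℕ) (hd : 1 ≤ d) : Fintype.card (Fin 10 × Idx d) ≤ 30*(d*d) := by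
  simp only [Idx, Fintype.card_prod, Fintype.card_sum, Fintype.card_fin, Fintype.card_unit]
  nlinarith

lemma final_bound (n d m : ℕ) (hd : 1 ≤ d)
    (hn : n ≤ 100000 * m) (hm : m ≤ 30 * (d*d)) : (n : ℝ) ≤ 10000000 * (d:ℝ)^2 := by
  have h1 : n ≤ 3000000 * (d*d) := le_trans hn (by nlinarith)
  calc (n:ℝ) ≤ ((3000000 * (d*d) : ℕ) : ℝ) := by exact_mod_cast h1
    _ ≤ 10000000 * (d:ℝ)^2 := by push_cast; nlinarith

/-- Each of the range spaces on `ℝ^d` given by closed balls, stadiums, cylinders, and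
capped cylinders has VC dimension `O(d²)`, and the same bound holds for each dual
range space (on the parameter tuples defining the shapes, with ranges indexed by the
points of `ℝ^d` they contain). -/
theorem vc_basic_shapes :
    ∃ C : ℝ, 0 < C ∧ ∀ d : ℕ, 1 ≤ d →
      (∀ Y : Finset (EuclideanSpace ℝ (Fin d)),
        Shatters {B | ∃ (p : EuclideanSpace ℝ (Fin d)) (r : ℝ), 0 < r ∧
            B = Metric.closedBall p r} Y →
        (Y.card : ℝ) ≤ C * d ^ 2) ∧
      (∀ Y : Finset (EuclideanSpace ℝ (Fin d)),
        Shatters {B | ∃ (s t : EuclideanSpace ℝ (Fin d)) (r : ℝ), s ≠ t ∧ 0 < r ∧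
            B = stadium s t r} Y →
        (Y.card : ℝ) ≤ C * d ^ 2) ∧
      (∀ Y : Finset (EuclideanSpace ℝ (Fin d)),
        Shatters {B | ∃ (s t : EuclideanSpace ℝ (Fin d)) (r : ℝ), s ≠ t ∧ 0 < r ∧
            B = cylinder s t r} Y →
        (Y.card : ℝ) ≤ C * d ^ 2) ∧
      (∀ Y : Finset (EuclideanSpace ℝ (Fin d)),
        Shatters {B | ∃ (s t : EuclideanSpace ℝ (Fin d)) (r : ℝ), s ≠ t ∧ 0 < r ∧
            B = cappedCylinder s t r} Y →
        (Y.card : ℝ) ≤ C * d ^ 2) ∧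
      (∀ Y : Finset ((EuclideanSpace ℝ (Fin d)) × ℝ),
        Shatters {B | ∃ x : EuclideanSpace ℝ (Fin d),
            B = {pr | x ∈ Metric.closedBall pr.1 pr.2}} Y →
        (Y.card : ℝ) ≤ C * d ^ 2) ∧
      (∀ Y : Finset (((EuclideanSpace ℝ (Fin d)) × (EuclideanSpace ℝ (Fin d))) × ℝ),
        Shatters {B | ∃ x : EuclideanSpace ℝ (Fin d),
            B = {str | x ∈ stadium str.1.1 str.1.2 str.2}} Y →
        (Y.card : ℝ) ≤ C * d ^ 2) ∧
      (∀ Y : Finset (((EuclideanSpace ℝ (Fin d)) × (EuclideanSpace ℝ (Fin d))) × ℝ),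
        Shatters {B | ∃ x : EuclideanSpace ℝ (Fin d),
            B = {str | x ∈ cylinder str.1.1 str.1.2 str.2}} Y →
        (Y.card : ℝ) ≤ C * d ^ 2) ∧
      (∀ Y : Finset (((EuclideanSpace ℝ (Fin d)) × (EuclideanSpace ℝ (Fin d))) × ℝ),
        Shatters {B | ∃ x : EuclideanSpace ℝ (Fin d),
            B = {str | x ∈ cappedCylinder str.1.1 str.1.2 str.2}} Y →
        (Y.card : ℝ) ≤ C * d ^ 2) := by
  refine ⟨10000000, by norm_num, fun d hd => ⟨?_, ?_, ?_, ?_, ?_, ?_, ?_, ?_⟩⟩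
  -- ball primal
  · intro Y hY
    refine final_bound Y.card d _ hd (master_vc (feat (d:=d)) _ ?_ Y hY) (card_Idx d hd)
    rintro B ⟨p, r, hr, rfl⟩
    refine ⟨FOf PredBall, fun i => batomCoef (p,r) i, ?_⟩
    ext x
    simp only [Set.mem_setOf_eq]
    have hfun : (fun i => decide (0 ≤ ∑ q, batomCoef (p,r) i q * feat q x))
        = (fun i => decide (0 ≤ batomVal (p,r) x i)) := funext fun i => by rw [batom_expand]
    rw [hfun, mem_FOf_iff]
    exact ball_char p x r
  -- stadium primal
  · intro Y hY
    refine final_bound Y.card d _ hd (master_vc (feat (d:=d)) _ ?_ Y hY) (card_Idx d hd)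
    rintro B ⟨s, t, r, hst, hr, rfl⟩
    refine ⟨FOf PredStad, fun i => atomCoef ((s,t),r) i, ?_⟩
    ext x
    simp only [Set.mem_setOf_eq]
    have hfun : (fun i => decide (0 ≤ ∑ q, atomCoef ((s,t),r) i q * feat q x))
        = (fun i => decide (0 ≤ atomVal ((s,t),r) x i)) := funext fun i => by rw [atom_expand]
    rw [hfun, mem_FOf_iff]
    exact stad_char s t x r
  -- cylinder primal
  · intro Y hY
    refine final_bound Y.card d _ hd (master_vc (feat (d:=d)) _ ?_ Y hY) (card_Idx d hd)
    rintro B ⟨s, t, r, hst, hr, rfl⟩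
    refine ⟨FOf PredCyl, fun i => atomCoef ((s,t),r) i, ?_⟩
    ext x
    simp only [Set.mem_setOf_eq]
    have hfun : (fun i => decide (0 ≤ ∑ q, atomCoef ((s,t),r) i q * feat q x))
        = (fun i => decide (0 ≤ atomVal ((s,t),r) x i)) := funext fun i => by rw [atom_expand]
    rw [hfun, mem_FOf_iff]
    exact cyl_char s t x r
  -- capped primal
  · intro Y hY
    refine final_bound Y.card d _ hd (master_vc (feat (d:=d)) _ ?_ Y hY) (card_Idx d hd)
    rintro B ⟨s, t, r, hst, hr, rfl⟩
    refine ⟨FOf PredCap, fun i => atomCoef ((s,t),r) i, ?_⟩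
    ext x
    simp only [Set.mem_setOf_eq]
    have hfun : (fun i => decide (0 ≤ ∑ q, atomCoef ((s,t),r) i q * feat q x))
        = (fun i => decide (0 ≤ atomVal ((s,t),r) x i)) := funext fun i => by rw [atom_expand]
    rw [hfun, mem_FOf_iff]
    exact cap_char s t x r
  -- ball dual
  · intro Y hY
    refine final_bound Y.card d _ hd
      (master_vc (fun (q : Fin 10 × Idx d) (θ : (EuclideanSpace ℝ (Fin d)) × ℝ) =>
        batomCoef θ q.1 q.2) _ ?_ Y hY) (card_dualIdx d hd)
    rintro B ⟨x, rfl⟩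
    refine ⟨FOf PredBall,
      fun i (q : Fin 10 × Idx d) => if q.1 = i then feat q.2 x else 0, ?_⟩
    ext θ
    obtain ⟨p, r⟩ := θ
    simp only [Set.mem_setOf_eq]
    have hfun : (fun i => decide (0 ≤ ∑ q : Fin 10 × Idx d,
          (if q.1 = i then feat q.2 x else 0) * batomCoef (p,r) q.1 q.2))
        = (fun i => decide (0 ≤ batomVal (p,r) x i)) := funext fun i => by rw [bdual_sum]
    rw [hfun, mem_FOf_iff]
    exact ball_char p x r
  -- stadium dual
  · intro Y hY
    refine final_bound Y.card d _ hd
      (master_vc (fun (q : Fin 10 × Idx d)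
        (θ : ((EuclideanSpace ℝ (Fin d)) × (EuclideanSpace ℝ (Fin d))) × ℝ) =>
        atomCoef θ q.1 q.2) _ ?_ Y hY) (card_dualIdx d hd)
    rintro B ⟨x, rfl⟩
    refine ⟨FOf PredStad,
      fun i (q : Fin 10 × Idx d) => if q.1 = i then feat q.2 x else 0, ?_⟩
    ext θ
    obtain ⟨⟨s,t⟩, r⟩ := θ
    simp only [Set.mem_setOf_eq]
    have hfun : (fun i => decide (0 ≤ ∑ q : Fin 10 × Idx d,
          (if q.1 = i then feat q.2 x else 0) * atomCoef ((s,t),r) q.1 q.2))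
        = (fun i => decide (0 ≤ atomVal ((s,t),r) x i)) := funext fun i => by rw [dual_sum]
    rw [hfun, mem_FOf_iff]
    exact stad_char s t x r
  -- cylinder dual
  · intro Y hY
    refine final_bound Y.card d _ hd
      (master_vc (fun (q : Fin 10 × Idx d)
        (θ : ((EuclideanSpace ℝ (Fin d)) × (EuclideanSpace ℝ (Fin d))) × ℝ) =>
        atomCoef θ q.1 q.2) _ ?_ Y hY) (card_dualIdx d hd)
    rintro B ⟨x, rfl⟩
    refine ⟨FOf PredCyl,
      fun i (q : Fin 10 × Idx d) => if q.1 = i then feat q.2 x else 0, ?_⟩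
    ext θ
    obtain ⟨⟨s,t⟩, r⟩ := θ
    simp only [Set.mem_setOf_eq]
    have hfun : (fun i => decide (0 ≤ ∑ q : Fin 10 × Idx d,
          (if q.1 = i then feat q.2 x else 0) * atomCoef ((s,t),r) q.1 q.2))
        = (fun i => decide (0 ≤ atomVal ((s,t),r) x i)) := funext fun i => by rw [dual_sum]
    rw [hfun, mem_FOf_iff]
    exact cyl_char s t x r
  -- capped dual
  · intro Y hY
    refine final_bound Y.card d _ hd
      (master_vc (fun (q : Fin 10 × Idx d)
        (θ : ((EuclideanSpace ℝ (Fin d)) × (EuclideanSpace ℝ (Fin d))) × ℝ) =>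
        atomCoef θ q.1 q.2) _ ?_ Y hY) (card_dualIdx d hd)
    rintro B ⟨x, rfl⟩
    refine ⟨FOf PredCap,
      fun i (q : Fin 10 × Idx d) => if q.1 = i then feat q.2 x else 0, ?_⟩
    ext θ
    obtain ⟨⟨s,t⟩, r⟩ := θ
    simp only [Set.mem_setOf_eq]
    have hfun : (fun i => decide (0 ≤ ∑ q : Fin 10 × Idx d,
          (if q.1 = i then feat q.2 x else 0) * atomCoef ((s,t),r) q.1 q.2))
        = (fun i => decide (0 ≤ atomVal ((s,t),r) x i)) := funext fun i => by rw [dual_sum]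
    rw [hfun, mem_FOf_iff]
    exact cap_char s t x r
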